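/- For every assignment α : {1,…,n} → {true,false} and every clause index j ∈ {1,…,m}: there exists a directed s-t path in G_φ that follows α and has total cost 0 under c^j if and only if α satisfies clause C_j. -/

import Mathlib

/-- Vertices of the graph `G_φ`: source `s`, sink `t`, and for each variable index
`i ∈ {1,…,n}` the four vertices `tᵢ¹, tᵢ², fᵢ¹, fᵢ²`.  Here `Vtx.mid i second isTrue`
is `tᵢ` if `isTrue = true`, `fᵢ` if `isTrue = false`; superscript `2` iff `second = true`. -/
inductive Vtx (n : ℕ) : Type where
  | s : Vtx n
  | t : Vtx n
  | mid (i : Fin n) (second : Bool) (isTrue : Bool) : Vtx n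
deriving DecidableEq

/-- The directed edges of `G_φ`. -/
def GEdge (n : ℕ) : Vtx n → Vtx n → Prop :=
  fun a b =>
    match a, b with
    | .s, .mid i false _ => (i : ℕ) = 0
    | .mid i false _, .mid j false _ => (j : ℕ) = (i : ℕ) + 1
    | .mid i true _, .mid j true _ => (j : ℕ) = (i : ℕ) + 1
    | .mid i false v, .mid j true w => j = i ∧ w = v
    | .mid i true _, .t => (i : ℕ) = n - 1
    | _, _ => False

/-- The edge costs `c^j` determined by a clause `C` (a set of literals `(i, ε)`):
a bridge edge `(tᵢ¹,tᵢ²)` (resp. `(fᵢ¹,fᵢ²)`) costs `0` if `(i,true) ∈ C`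
(resp. `(i,false) ∈ C`) and `1` otherwise; all non-bridge edges cost `0`. -/
def cost (n : ℕ) (C : Finset (Fin n × Bool)) : Vtx n → Vtx n → ℕ
  | .mid i false v, .mid j true w =>
      if j = i ∧ w = v then (if (i, v) ∈ C then 0 else 1) else 0
  | _, _ => 0

/-- The cost of a path (list of vertices) under the scenario of clause `C`:
the sum of the edge costs over consecutive pairs. -/
def pathCost (n : ℕ) (C : Finset (Fin n × Bool)) (P : List (Vtx n)) : ℕ :=
  ((P.zip P.tail).map fun q => cost n C q.1 q.2).sum

/-- A directed `s`-`t` path in `G_φ`: consecutive pairs are edges, vertices are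
pairwise distinct, the first vertex is `s` and the last is `t`. -/
def isSTPath (n : ℕ) (P : List (Vtx n)) : Prop :=
  P.Chain' (GEdge n) ∧ P.Nodup ∧ P.head? = some Vtx.s ∧ P.getLast? = some Vtx.t

/-- A path follows the assignment `α` if for every index `i`, each of its vertices with
index `i` is a `t`-vertex when `α i = true` and an `f`-vertex when `α i = false`. -/
def follows (n : ℕ) (α : Fin n → Bool) (P : List (Vtx n)) : Prop :=
  ∀ (i : Fin n) (second v : Bool), Vtx.mid i second v ∈ P → v = α i

/-- The assignment `α` satisfies the clause `C` if it makes some literal of `C` true. -/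
def satisfiesClause (n : ℕ) (α : Fin n → Bool) (C : Finset (Fin n × Bool)) : Prop :=
  ∃ l ∈ C, α l.1 = l.2

/- ### Auxiliary lemmas -/

lemma mem_zip_tail {β : Type*} : ∀ (l : List β) (a b : β), (a, b) ∈ l.zip l.tail →
    ∃ k, l[k]? = some a ∧ l[k+1]? = some b := by
  intro l
  induction l with
  | nil => simp
  | cons x l ih =>
    intro a b h
    cases l with
    | nil => simp [List.zip] at h
    | cons y l' =>
      simp only [List.tail_cons, List.zip_cons_cons, List.mem_cons] at h
      rcases h with h | h
      · refine ⟨0, ?_, ?_⟩ <;> simp [Prod.ext_iff] at h <;> simp [h.1, h.2]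
      · obtain ⟨k, h1, h2⟩ := ih a b (by simpa using h)
        exact ⟨k + 1, by simpa using h1, by simpa using h2⟩

lemma exists_bridge {n : ℕ} : ∀ (P : List (Vtx n)) (x z : Vtx n),
    List.Chain' (GEdge n) (x :: P) →
    (x = Vtx.s ∨ ∃ i v, x = Vtx.mid i false v) →
    (x :: P).getLast? = some z →
    (z = Vtx.t ∨ ∃ i v, z = Vtx.mid i true v) →
    ∃ i v, ((Vtx.mid i false v : Vtx n), (Vtx.mid i true v : Vtx n)) ∈ (x :: P).zip P := by
  intro P
  induction P with
  | nil =>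
    intro x z _ hlo hz hhi
    simp at hz
    subst hz
    rcases hlo with rfl | ⟨i, v, rfl⟩ <;> rcases hhi with h | ⟨i', v', h⟩ <;> simp_all
  | cons y P' ih =>
    intro x z hch hlo hz hhi
    have hedge : GEdge n x y := (List.isChain_cons_cons.mp hch).1
    have hch' : List.Chain' (GEdge n) (y :: P') := (List.isChain_cons_cons.mp hch).2
    have hz' : (y :: P').getLast? = some z := by
      rwa [List.getLast?_cons_cons] at hz
    cases y with
    | s =>
      rcases hlo with rfl | ⟨i, v, rfl⟩ <;> exact hedge.elim
    | t =>
      rcases hlo with rfl | ⟨i, v, rfl⟩ <;> exact hedge.elim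
    | mid i' b w =>
      cases b with
      | false =>
        obtain ⟨i, v, hm⟩ := ih (Vtx.mid i' false w) z hch' (Or.inr ⟨i', w, rfl⟩) hz' hhi
        exact ⟨i, v, List.mem_cons_of_mem _ hm⟩
      | true =>
        rcases hlo with rfl | ⟨i, v, rfl⟩
        · exact hedge.elim
        · obtain ⟨rfl, rfl⟩ : i' = i ∧ w = v := hedge
          exact ⟨_, _, List.mem_cons_self⟩

/-- index helper -/
def bidx (n : ℕ) (hn : 0 < n) (k : ℕ) : Fin n := ⟨k % n, Nat.mod_lt _ hn⟩

lemma bidx_val {n : ℕ} (hn : 0 < n) {k : ℕ} (hk : k < n) : ((bidx n hn k : Fin n) : ℕ) = k :=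
  Nat.mod_eq_of_lt hk

/-- vertex at position `p` of the canonical path switching levels after index `q` -/
def bpath (n : ℕ) (hn : 0 < n) (α : Fin n → Bool) (q : ℕ) (p : ℕ) : Vtx n :=
  if p = 0 then Vtx.s
  else if p ≤ q + 1 then Vtx.mid (bidx n hn (p - 1)) false (α (bidx n hn (p - 1)))
  else if p ≤ n + 1 then Vtx.mid (bidx n hn (p - 2)) true (α (bidx n hn (p - 2)))
  else Vtx.t

section
variable {n : ℕ} (hn : 0 < n) (α : Fin n → Bool) {q : ℕ}

lemma bpath_zero : bpath n hn α q 0 = Vtx.s := rfl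

lemma bpath_false {p : ℕ} (h1 : 1 ≤ p) (h2 : p ≤ q + 1) :
    bpath n hn α q p = Vtx.mid (bidx n hn (p - 1)) false (α (bidx n hn (p - 1))) := by
  unfold bpath; rw [if_neg (by omega), if_pos h2]

lemma bpath_true {p : ℕ} (h1 : q + 2 ≤ p) (h2 : p ≤ n + 1) :
    bpath n hn α q p = Vtx.mid (bidx n hn (p - 2)) true (α (bidx n hn (p - 2))) := by
  unfold bpath; rw [if_neg (by omega), if_neg (by omega), if_pos h2]

lemma bpath_last (hq : q + 1 ≤ n) {p : ℕ} (h : n + 2 ≤ p) : bpath n hn α q p = Vtx.t := by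
  unfold bpath; rw [if_neg (by omega), if_neg (by omega), if_neg (by omega)]

/-- decoding map showing injectivity of `bpath` -/
def bdec : Vtx n → ℕ
  | .s => 0
  | .t => n + 2
  | .mid i false _ => (i : ℕ) + 1
  | .mid i true _ => (i : ℕ) + 2

lemma bdec_bpath (hq : q + 1 ≤ n) : ∀ p < n + 3, bdec (bpath n hn α q p) = p := by
  intro p hp
  rcases Nat.eq_zero_or_pos p with rfl | hp1
  · simp [bpath_zero, bdec]
  rcases le_or_gt p (q + 1) with h2 | h2
  · rw [bpath_false hn α hp1 h2]
    simp only [bdec]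
    rw [bidx_val hn (by omega)]; omega
  rcases le_or_gt p (n + 1) with h3 | h3
  · rw [bpath_true hn α (by omega) h3]
    simp only [bdec]
    rw [bidx_val hn (by omega)]; omega
  · rw [bpath_last hn α hq (by omega)]
    simp only [bdec]; omega

lemma bpath_chain (hq : q + 1 ≤ n) :
    List.Chain' (GEdge n) ((List.range (n + 3)).map (bpath n hn α q)) := by
  unfold List.Chain'
  rw [List.isChain_map]
  rw [show n + 3 = (n + 2) + 1 from rfl, List.isChain_range_succ]
  intro p hp
  rcases Nat.eq_zero_or_pos p with rfl | hp1
  · rw [bpath_zero, bpath_false hn α (by omega) (by omega)]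
    show ((bidx n hn (1 - 1) : Fin n) : ℕ) = 0
    rw [bidx_val hn (by omega)]
  rcases le_or_gt p q with h2 | h2
  · rw [bpath_false hn α hp1 (by omega), bpath_false hn α (by omega) (by omega)]
    show ((bidx n hn (p + 1 - 1) : Fin n) : ℕ) = ((bidx n hn (p - 1) : Fin n) : ℕ) + 1
    rw [bidx_val hn (by omega), bidx_val hn (by omega)]; omega
  rcases eq_or_lt_of_le (show q + 1 ≤ p by omega) with h3 | h3
  · subst h3
    rw [bpath_false hn α hp1 le_rfl, bpath_true hn α (by omega) (by omega)]
    exact ⟨rfl, rfl⟩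
  rcases le_or_gt p n with h4 | h4
  · rw [bpath_true hn α (by omega) (by omega), bpath_true hn α (by omega) (by omega)]
    show ((bidx n hn (p + 1 - 2) : Fin n) : ℕ) = ((bidx n hn (p - 2) : Fin n) : ℕ) + 1
    rw [bidx_val hn (by omega), bidx_val hn (by omega)]; omega
  · have hpn : p = n + 1 := by omega
    subst hpn
    rw [bpath_true hn α (by omega) le_rfl, bpath_last hn α hq (by omega)]
    show ((bidx n hn (n + 1 - 2) : Fin n) : ℕ) = n - 1
    rw [bidx_val hn (by omega)]; omega

end

/-- For every assignment `α` and clause index `j`: there exists a directed `s`-`t` path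
in `G_φ` that follows `α` and has total cost `0` under `c^j` iff `α` satisfies `C_j`. -/
theorem stmt7 (n m : ℕ) (hn : 1 ≤ n) (hm : 1 ≤ m)
    (C : Fin m → Finset (Fin n × Bool)) (hC : ∀ j, (C j).card ≤ 3)
    (α : Fin n → Bool) (j : Fin m) :
    (∃ P : List (Vtx n), isSTPath n P ∧ follows n α P ∧ pathCost n (C j) P = 0) ↔
      satisfiesClause n α (C j) := by
  constructor
  · rintro ⟨P, ⟨hch, hnd, hhd, hlast⟩, hfol, hcost⟩
    obtain ⟨x, P', rfl⟩ : ∃ x P', P = x :: P' := by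
      cases P with
      | nil => simp at hhd
      | cons a l => exact ⟨a, l, rfl⟩
    have hx : x = Vtx.s := by simpa using hhd
    subst hx
    obtain ⟨i, v, hmem⟩ := exists_bridge P' Vtx.s Vtx.t hch (Or.inl rfl) hlast (Or.inl rfl)
    unfold pathCost at hcost
    have h0 : cost n (C j) (Vtx.mid i false v) (Vtx.mid i true v) = 0 :=
      List.sum_eq_zero_iff.mp hcost _
        (List.mem_map_of_mem (f := fun p : Vtx n × Vtx n => cost n (C j) p.1 p.2) hmem)
    have hv : v = α i := hfol i false v (List.of_mem_zip hmem).1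
    simp [cost] at h0
    exact ⟨(i, v), h0, hv.symm⟩
  · rintro ⟨⟨i₀, ε⟩, hmemC, hsat⟩
    simp only at hsat
    subst hsat
    have hn0 : 0 < n := hn
    set q : ℕ := (i₀ : ℕ) with hqdef
    have hq : q + 1 ≤ n := i₀.isLt
    have hbi : bidx n hn0 q = i₀ := Fin.ext (bidx_val hn0 i₀.isLt)
    refine ⟨(List.range (n + 3)).map (bpath n hn0 α q),
      ⟨bpath_chain hn0 α hq, ?_, ?_, ?_⟩, ?_, ?_⟩
    · refine List.nodup_range.map_on ?_
      intro x hx y hy hxy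
      rw [List.mem_range] at hx hy
      rw [← bdec_bpath hn0 α hq x hx, hxy, bdec_bpath hn0 α hq y hy]
    · rw [show n + 3 = (n + 2) + 1 from rfl, List.range_succ_eq_map]
      simp [bpath_zero]
    · rw [show n + 3 = (n + 2) + 1 from rfl, List.range_succ, List.map_append]
      simp [bpath_last hn0 α hq (le_refl (n + 2))]
    · intro i second v hv
      rw [List.mem_map] at hv
      obtain ⟨p, hp, hgp⟩ := hv
      rw [List.mem_range] at hp
      rcases Nat.eq_zero_or_pos p with rfl | hp1
      · rw [bpath_zero] at hgp; simp at hgp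
      rcases le_or_gt p (q + 1) with h2 | h2
      · rw [bpath_false hn0 α hp1 h2] at hgp
        injection hgp with e1 e2 e3
        exact e3.symm.trans (congrArg α e1)
      rcases le_or_gt p (n + 1) with h3 | h3
      · rw [bpath_true hn0 α (by omega) h3] at hgp
        injection hgp with e1 e2 e3
        exact e3.symm.trans (congrArg α e1)
      · rw [bpath_last hn0 α hq (by omega)] at hgp; simp at hgp
    · unfold pathCost
      apply List.sum_eq_zero
      intro x hx
      rw [List.mem_map] at hx
      obtain ⟨⟨a, b⟩, hab, rfl⟩ := hx
      obtain ⟨k, hk1, hk2⟩ := mem_zip_tail _ _ _ hab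
      rw [List.getElem?_map] at hk1 hk2
      have hlt : k + 1 < n + 3 := by
        by_contra h
        rw [List.getElem?_eq_none (by simpa using h)] at hk2
        simp at hk2
      rw [List.getElem?_range (by omega)] at hk1
      rw [List.getElem?_range hlt] at hk2
      simp only [Option.map_some, Option.some.injEq] at hk1 hk2
      subst hk1; subst hk2
      rcases Nat.eq_zero_or_pos k with rfl | hk0
      · rw [bpath_zero]; rfl
      rcases le_or_gt k q with h2 | h2
      · rw [bpath_false hn0 α hk0 (by omega), bpath_false hn0 α (by omega) (by omega)]
        rfl
      rcases eq_or_lt_of_le (show q + 1 ≤ k by omega) with h3 | h3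
      · subst h3
        rw [bpath_false hn0 α hk0 le_rfl, bpath_true hn0 α (by omega) (by omega)]
        show cost n (C j) (Vtx.mid (bidx n hn0 q) false (α (bidx n hn0 q)))
          (Vtx.mid (bidx n hn0 q) true (α (bidx n hn0 q))) = 0
        rw [hbi]
        simp [cost, hmemC]
      rcases le_or_gt k n with h4 | h4
      · rw [bpath_true hn0 α (by omega) (by omega), bpath_true hn0 α (by omega) (by omega)]
        rfl
      · have hkn : k = n + 1 := by omega
        subst hkn
        rw [bpath_true hn0 α (by omega) le_rfl, bpath_last hn0 α hq (by omega)]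
        rfl
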